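/- arXiv:2312.14329 — 3 statements merged into one kernel-verified Lean document; each statement's English description precedes it below -/
import Mathlib

section
/- Let Ω be a standard Borel probability space and let U : Ω → 𝒰, M₁ : Ω → ℳ₁, M₂ : Ω → ℳ₂, N : Ω → 𝒩 be mutually independent random variables into measurable spaces. Define W(ω) = φ(U(ω), M₁(ω)), E(ω) = ψ(U(ω), M₂(ω)), and X_a(ω) = h(W(ω), N(ω)) for measurable maps φ : 𝒰 × ℳ₁ → 𝒲, ψ : 𝒰 × ℳ₂ → ℰ, h : 𝒲 × 𝒩 → 𝒳. Then X_a and E are conditionally independent given the σ-algebra generated by W. -/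
set_option maxHeartbeats 1000000

open MeasureTheory ProbabilityTheory

/-- If `T` belongs to a σ-algebra independent of `mG`, `A` is `mG`-measurable and `m' ≤ mG`,
then `μ⟦T ∩ A | m'⟧ = μ T • μ⟦A | m'⟧` a.e. -/
lemma aux_condexp_inter_indep
    {Ω : Type*} {m' mN mG : MeasurableSpace Ω} {mΩ : MeasurableSpace Ω}
    {μ : Measure Ω} [IsProbabilityMeasure μ]
    (hm' : m' ≤ mΩ) (hG : mG ≤ mΩ) (hNle : mN ≤ mΩ)
    (hm'G : m' ≤ mG) (hInd : Indep mN mG μ)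
    {T A : Set Ω} (hT : MeasurableSet[mN] T) (hA : MeasurableSet[mG] A) :
    (fun ω => (μ T).toReal * (μ⟦A | m'⟧) ω) =ᵐ[μ] μ⟦T ∩ A | m'⟧ := by
  have hTm : MeasurableSet[mΩ] T := hNle T hT
  have hAm : MeasurableSet[mΩ] A := hG A hA
  refine ae_eq_condExp_of_forall_setIntegral_eq hm' ?_ ?_ ?_ ?_
  · exact (integrable_const (1:ℝ)).indicator (hTm.inter hAm)
  · exact fun s _ _ => (integrable_condExp.const_mul _).integrableOn
  · intro s hs _
    rw [integral_const_mul, setIntegral_condExp hm' ((integrable_const (1:ℝ)).indicator hAm) hs,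
      setIntegral_indicator hAm, setIntegral_indicator (hTm.inter hAm),
      setIntegral_const, setIntegral_const]
    have hkey : μ (s ∩ (T ∩ A)) = μ T * μ (s ∩ A) := by
      have h := (Indep_iff mN mG μ).mp hInd T (s ∩ A) hT ((hm'G s hs).inter hA)
      rw [show s ∩ (T ∩ A) = T ∩ (s ∩ A) by ext x; simp only [Set.mem_inter_iff]; tauto]
      exact h
    rw [measureReal_def, measureReal_def, hkey, ENNReal.toReal_mul]
    simp [smul_eq_mul]
  · exact StronglyMeasurable.aestronglyMeasurable (stronglyMeasurable_condExp.const_mul _)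

/-- If `mN` is independent of `mG`, `m' ≤ mG`, `mE ≤ mG` and `mX ≤ m' ⊔ mN`, then
`mX` and `mE` are conditionally independent given `m'`. -/
lemma aux_condIndep
    {Ω : Type*} {m' mN mG mX mE : MeasurableSpace Ω} {mΩ : MeasurableSpace Ω}
    [StandardBorelSpace Ω] {μ : Measure Ω} [IsProbabilityMeasure μ]
    (hm' : m' ≤ mΩ) (hG : mG ≤ mΩ) (hNle : mN ≤ mΩ)
    (hm'G : m' ≤ mG) (hE : mE ≤ mG) (hX : mX ≤ m' ⊔ mN)
    (hInd : Indep mN mG μ) :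
    CondIndep m' mX mE hm' μ := by
  have hEΩ : mE ≤ mΩ := hE.trans hG
  set p1 : Set (Set Ω) :=
    {u | ∃ S, MeasurableSet[m'] S ∧ ∃ T, MeasurableSet[mN] T ∧ u = S ∩ T} with hp1def
  have hgen1 : m' ⊔ mN = MeasurableSpace.generateFrom p1 := by
    refine le_antisymm (sup_le ?_ ?_) (MeasurableSpace.generateFrom_le ?_)
    · intro s hs
      exact MeasurableSpace.measurableSet_generateFrom
        ⟨s, hs, Set.univ, MeasurableSet.univ, (Set.inter_univ s).symm⟩
    · intro s hs
      exact MeasurableSpace.measurableSet_generateFrom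
        ⟨Set.univ, MeasurableSet.univ, s, hs, (Set.univ_inter s).symm⟩
    · rintro u ⟨S, hS, T, hT, rfl⟩
      exact ((le_sup_left : m' ≤ m' ⊔ mN) S hS).inter ((le_sup_right : mN ≤ m' ⊔ mN) T hT)
  have hpi1 : IsPiSystem p1 := by
    rintro u ⟨S1, hS1, T1, hT1, rfl⟩ v ⟨S2, hS2, T2, hT2, rfl⟩ _
    exact ⟨S1 ∩ S2, hS1.inter hS2, T1 ∩ T2, hT1.inter hT2,
      by ext x; simp only [Set.mem_inter_iff]; tauto⟩
  have h2 : CondIndep m' (m' ⊔ mN) mE hm' μ := by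
    refine CondIndepSets.condIndep (sup_le hm' hNle) hEΩ hpi1
      (@MeasurableSpace.isPiSystem_measurableSet Ω mE) hgen1
      (@MeasurableSpace.generateFrom_measurableSet Ω mE).symm ?_
    refine (condIndepSets_iff m' hm' p1 {s | MeasurableSet[mE] s}
      (fun u hu => by obtain ⟨S, hS, T, hT, rfl⟩ := hu; exact (hm' S hS).inter (hNle T hT))
      (fun s hs => hEΩ s hs) μ).mpr ?_
    rintro u B ⟨S, hS, T, hT, rfl⟩ hB
    have hBm : MeasurableSet[mG] B := hE B hB
    have e1 : (S ∩ T) ∩ B = T ∩ (S ∩ B) := by ext x; simp only [Set.mem_inter_iff]; tauto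
    have h1 := aux_condexp_inter_indep hm' hG hNle hm'G hInd hT ((hm'G S hS).inter hBm)
    have hSsm : StronglyMeasurable[m'] (S.indicator (fun _ => (1:ℝ))) :=
      stronglyMeasurable_const.indicator hS
    have hSint : Integrable (S.indicator (fun _ => (1:ℝ))) μ :=
      (integrable_const (1:ℝ)).indicator (hm' S hS)
    have h3 : (μ⟦S ∩ B | m'⟧) =ᵐ[μ] S.indicator (fun _ => (1:ℝ)) * μ⟦B | m'⟧ := by
      have hind_eq : (S ∩ B).indicator (fun _ => (1:ℝ))
          = S.indicator (fun _ => (1:ℝ)) * B.indicator (fun _ => (1:ℝ)) :=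
        Set.inter_indicator_one
      rw [show (μ⟦S ∩ B | m'⟧)
          = μ[S.indicator (fun _ => (1:ℝ)) * B.indicator (fun _ => (1:ℝ)) | m'] by
        rw [← hind_eq]]
      exact condExp_mul_of_stronglyMeasurable_left hSsm
        (by rw [← hind_eq]; exact (integrable_const (1:ℝ)).indicator ((hm' S hS).inter (hEΩ B hB)))
        ((integrable_const (1:ℝ)).indicator (hEΩ B hB))
    have h4 : (μ⟦S | m'⟧) = S.indicator (fun _ => (1:ℝ)) :=
      condExp_of_stronglyMeasurable hm' hSsm hSint
    have h5 : (fun ω => (μ T).toReal * S.indicator (fun _ => (1:ℝ)) ω) =ᵐ[μ] μ⟦S ∩ T | m'⟧ := by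
      have h6 := aux_condexp_inter_indep hm' hG hNle hm'G hInd hT (hm'G S hS)
      rw [h4] at h6
      rw [Set.inter_comm S T]
      exact h6
    rw [e1]
    filter_upwards [h1, h3, h5] with ω hω1 hω3 hω5
    rw [← hω1, Pi.mul_apply, ← hω5, hω3, Pi.mul_apply]
    ring
  exact condIndep_of_condIndep_of_le_left h2 hX

/-- Confounded case of the paper's Lemma: with a latent confounder `U` of the anomaly
label `W = φ (U, M₁)` and the environment `E = ψ (U, M₂)`, and content features
`X_a = h (W, N)`, the variables `X_a` and `E` are conditionally independent given the
σ-algebra generated by `W`. -/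
theorem content_condIndep_env_of_confounding
    {Ω 𝒰 ℳ₁ ℳ₂ 𝒩 𝒲 ℰ 𝒳 : Type*}
    [MeasurableSpace Ω] [StandardBorelSpace Ω]
    [m𝒰 : MeasurableSpace 𝒰] [mℳ₁ : MeasurableSpace ℳ₁] [mℳ₂ : MeasurableSpace ℳ₂]
    [m𝒩 : MeasurableSpace 𝒩] [m𝒲 : MeasurableSpace 𝒲] [mℰ : MeasurableSpace ℰ]
    [MeasurableSpace 𝒳]
    (μ : Measure Ω) [IsProbabilityMeasure μ]
    (U : Ω → 𝒰) (M₁ : Ω → ℳ₁) (M₂ : Ω → ℳ₂) (N : Ω → 𝒩)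
    (hU : Measurable U) (hM₁ : Measurable M₁) (hM₂ : Measurable M₂) (hN : Measurable N)
    (hindep : iIndep
      ![MeasurableSpace.comap U m𝒰, MeasurableSpace.comap M₁ mℳ₁,
        MeasurableSpace.comap M₂ mℳ₂, MeasurableSpace.comap N m𝒩] μ)
    (φ : 𝒰 × ℳ₁ → 𝒲) (ψ : 𝒰 × ℳ₂ → ℰ) (h : 𝒲 × 𝒩 → 𝒳)
    (hφ : Measurable φ) (hψ : Measurable ψ) (hh : Measurable h) :
    CondIndepFun (MeasurableSpace.comap (fun ω => φ (U ω, M₁ ω)) m𝒲)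
      ((hφ.comp (hU.prodMk hM₁)).comap_le)
      (fun ω => h (φ (U ω, M₁ ω), N ω)) (fun ω => ψ (U ω, M₂ ω)) μ := by
  have hUG : Measurable[MeasurableSpace.comap U m𝒰 ⊔ MeasurableSpace.comap M₁ mℳ₁ ⊔
      MeasurableSpace.comap M₂ mℳ₂] U :=
    Measurable.le (le_sup_left.trans le_sup_left) (measurable_iff_comap_le.mpr le_rfl)
  have hM₁G : Measurable[MeasurableSpace.comap U m𝒰 ⊔ MeasurableSpace.comap M₁ mℳ₁ ⊔
      MeasurableSpace.comap M₂ mℳ₂] M₁ :=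
    Measurable.le (le_sup_right.trans le_sup_left) (measurable_iff_comap_le.mpr le_rfl)
  have hM₂G : Measurable[MeasurableSpace.comap U m𝒰 ⊔ MeasurableSpace.comap M₁ mℳ₁ ⊔
      MeasurableSpace.comap M₂ mℳ₂] M₂ :=
    Measurable.le le_sup_right (measurable_iff_comap_le.mpr le_rfl)
  have hG : MeasurableSpace.comap U m𝒰 ⊔ MeasurableSpace.comap M₁ mℳ₁ ⊔
      MeasurableSpace.comap M₂ mℳ₂ ≤ ‹MeasurableSpace Ω› :=
    sup_le (sup_le hU.comap_le hM₁.comap_le) hM₂.comap_le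
  have hm'G : MeasurableSpace.comap (fun ω => φ (U ω, M₁ ω)) m𝒲 ≤
      MeasurableSpace.comap U m𝒰 ⊔ MeasurableSpace.comap M₁ mℳ₁ ⊔
      MeasurableSpace.comap M₂ mℳ₂ :=
    measurable_iff_comap_le.mp (hφ.comp (hUG.prodMk hM₁G))
  have hEle : MeasurableSpace.comap (fun ω => ψ (U ω, M₂ ω)) mℰ ≤
      MeasurableSpace.comap U m𝒰 ⊔ MeasurableSpace.comap M₁ mℳ₁ ⊔
      MeasurableSpace.comap M₂ mℳ₂ :=
    measurable_iff_comap_le.mp (hψ.comp (hUG.prodMk hM₂G))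
  have hWsup : Measurable[MeasurableSpace.comap (fun ω => φ (U ω, M₁ ω)) m𝒲 ⊔
      MeasurableSpace.comap N m𝒩] (fun ω => φ (U ω, M₁ ω)) :=
    Measurable.le le_sup_left (measurable_iff_comap_le.mpr le_rfl)
  have hNsup : Measurable[MeasurableSpace.comap (fun ω => φ (U ω, M₁ ω)) m𝒲 ⊔
      MeasurableSpace.comap N m𝒩] N :=
    Measurable.le le_sup_right (measurable_iff_comap_le.mpr le_rfl)
  have hX : MeasurableSpace.comap (fun ω => h (φ (U ω, M₁ ω), N ω)) ‹MeasurableSpace 𝒳› ≤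
      MeasurableSpace.comap (fun ω => φ (U ω, M₁ ω)) m𝒲 ⊔ MeasurableSpace.comap N m𝒩 :=
    measurable_iff_comap_le.mp (hh.comp (hWsup.prodMk hNsup))
  have hInd : Indep (MeasurableSpace.comap N m𝒩)
      (MeasurableSpace.comap U m𝒰 ⊔ MeasurableSpace.comap M₁ mℳ₁ ⊔
        MeasurableSpace.comap M₂ mℳ₂) μ := by
    have hdisj : Disjoint ({3} : Set (Fin 4)) {0, 1, 2} := by
      simp [Set.disjoint_singleton_left]
    have h_le : ∀ i, (![MeasurableSpace.comap U m𝒰, MeasurableSpace.comap M₁ mℳ₁,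
        MeasurableSpace.comap M₂ mℳ₂, MeasurableSpace.comap N m𝒩] : Fin 4 → MeasurableSpace Ω) i
        ≤ ‹MeasurableSpace Ω› := by
      intro i
      fin_cases i
      exacts [hU.comap_le, hM₁.comap_le, hM₂.comap_le, hN.comap_le]
    have hind2 := indep_iSup_of_disjoint h_le hindep hdisj
    rw [iSup_singleton, iSup_insert, iSup_insert, iSup_singleton] at hind2
    simpa [sup_assoc] using hind2
  exact aux_condIndep ((hφ.comp (hU.prodMk hM₁)).comap_le) hG hN.comap_le hm'G hEle hX hInd
end

section
/- Let Ω be a probability space and let W : Ω → 𝒲, E : Ω → ℰ, N : Ω → 𝒩 be random variables into measurable spaces that are mutually independent. Let h : 𝒲 × 𝒩 → 𝒳 be measurable and define X_a(ω) = h(W(ω), N(ω)). Let Z : Ω → 𝒵 be a random variable whose generated σ-algebra is contained in that of X_a, i.e. MeasurableSpace.comap Z ≤ MeasurableSpace.comap X_a. Then Z and E are independent random variables. -/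
open MeasureTheory ProbabilityTheory

/-- Unconfounded case of the paper's Theorem 1: if `W`, `E`, `N` are mutually independent,
`X_a = h (W, N)` for measurable `h`, and the representation `Z` is `X_a`-measurable
(`σ(Z) ⊆ σ(X_a)`), then `Z` and `E` are independent. -/
theorem representation_indep_env_of_no_confounding
    {Ω 𝒲 ℰ 𝒩 𝒳 𝒵 : Type*} [MeasurableSpace Ω]
    [m𝒲 : MeasurableSpace 𝒲] [mℰ : MeasurableSpace ℰ] [m𝒩 : MeasurableSpace 𝒩]
    [m𝒳 : MeasurableSpace 𝒳] [m𝒵 : MeasurableSpace 𝒵]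
    (μ : Measure Ω) [IsProbabilityMeasure μ]
    (W : Ω → 𝒲) (E : Ω → ℰ) (N : Ω → 𝒩)
    (hW : Measurable W) (hE : Measurable E) (hN : Measurable N)
    (hindep : iIndep
      ![MeasurableSpace.comap W m𝒲, MeasurableSpace.comap E mℰ,
        MeasurableSpace.comap N m𝒩] μ)
    (h : 𝒲 × 𝒩 → 𝒳) (hh : Measurable h)
    (Z : Ω → 𝒵)
    (hZ : MeasurableSpace.comap Z m𝒵 ≤
      MeasurableSpace.comap (fun ω => h (W ω, N ω)) m𝒳) :
    IndepFun Z E μ := by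
  classical
  set m : Fin 3 → MeasurableSpace Ω :=
    ![MeasurableSpace.comap W m𝒲, MeasurableSpace.comap E mℰ,
      MeasurableSpace.comap N m𝒩] with hm
  have h_le : ∀ i, m i ≤ ‹MeasurableSpace Ω› := by
    intro i
    fin_cases i
    · exact hW.comap_le
    · exact hE.comap_le
    · exact hN.comap_le
  have hdisj : Disjoint ({0, 2} : Set (Fin 3)) ({1} : Set (Fin 3)) := by
    simp [Set.disjoint_left]
  have hind : Indep (⨆ i ∈ ({0, 2} : Set (Fin 3)), m i)
      (⨆ i ∈ ({1} : Set (Fin 3)), m i) μ :=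
    indep_iSup_of_disjoint h_le hindep hdisj
  -- σ(pair (W, N))
  have hpair : MeasurableSpace.comap (fun ω => (W ω, N ω)) inferInstance =
      MeasurableSpace.comap W m𝒲 ⊔ MeasurableSpace.comap N m𝒩 := by
    rw [show (inferInstance : MeasurableSpace (𝒲 × 𝒩)) =
      m𝒲.comap Prod.fst ⊔ m𝒩.comap Prod.snd from rfl,
      MeasurableSpace.comap_sup, MeasurableSpace.comap_comp, MeasurableSpace.comap_comp]
    rfl
  have hZle : MeasurableSpace.comap Z m𝒵 ≤ ⨆ i ∈ ({0, 2} : Set (Fin 3)), m i := by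
    refine hZ.trans ?_
    have h1 : MeasurableSpace.comap (fun ω => h (W ω, N ω)) m𝒳 ≤
        MeasurableSpace.comap (fun ω => (W ω, N ω)) inferInstance := by
      rw [show (fun ω => h (W ω, N ω)) = h ∘ (fun ω => (W ω, N ω)) from rfl,
        ← MeasurableSpace.comap_comp]
      exact MeasurableSpace.comap_mono hh.comap_le
    refine h1.trans ?_
    rw [hpair]
    refine sup_le ?_ ?_
    · exact le_trans (le_of_eq rfl) (le_biSup m (by simp : (0 : Fin 3) ∈ ({0, 2} : Set (Fin 3))))
    · exact le_trans (le_of_eq rfl) (le_biSup m (by simp : (2 : Fin 3) ∈ ({0, 2} : Set (Fin 3))))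
  have hEle : MeasurableSpace.comap E mℰ ≤ ⨆ i ∈ ({1} : Set (Fin 3)), m i :=
    le_trans (le_of_eq rfl) (le_biSup m (by simp : (1 : Fin 3) ∈ ({1} : Set (Fin 3))))
  rw [IndepFun_iff_Indep]
  exact indep_of_indep_of_le_right (indep_of_indep_of_le_left hind hZle) hEle
end

section
/- Let Ω be a standard Borel probability space and let U : Ω → 𝒰, M₁ : Ω → ℳ₁, M₂ : Ω → ℳ₂, N : Ω → 𝒩 be mutually independent random variables into measurable spaces. Define W(ω) = φ(U(ω), M₁(ω)), E(ω) = ψ(U(ω), M₂(ω)), and X_a(ω) = h(W(ω), N(ω)) for measurable maps φ, ψ, h. Let Z : Ω → 𝒵 be a random variable whose generated σ-algebra is contained in that of X_a, i.e. MeasurableSpace.comap Z ≤ MeasurableSpace.comap X_a. Then Z and E are conditionally independent given the σ-algebra generated by W. -/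
open MeasureTheory ProbabilityTheory MeasurableSpace

/-- Core lemma: if `mG ⊥ mN`, `m' ≤ mG`, then `m' ⊔ mN` and `mG` are conditionally
independent given `m'`. -/
lemma condIndep_sup_of_indep {Ω : Type*} {m' mN mG : MeasurableSpace Ω}
    {mΩ : MeasurableSpace Ω} [StandardBorelSpace Ω]
    {μ : Measure Ω} [IsProbabilityMeasure μ]
    (hm'G : m' ≤ mG) (hG : mG ≤ mΩ) (hNle : mN ≤ mΩ)
    (hindep : ProbabilityTheory.Indep mG mN μ) :
    ProbabilityTheory.CondIndep m' (m' ⊔ mN) mG (hm'G.trans hG) μ := by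
  have hm' : m' ≤ mΩ := hm'G.trans hG
  set p1 : Set (Set Ω) :=
    Set.image2 (· ∩ ·) {s | MeasurableSet[m'] s} {s | MeasurableSet[mN] s} with hp1def
  set p2 : Set (Set Ω) := {s | MeasurableSet[mG] s} with hp2def
  have hp1 : IsPiSystem p1 := by
    rintro s ⟨a₁, ha₁, b₁, hb₁, rfl⟩ t ⟨a₂, ha₂, b₂, hb₂, rfl⟩ _
    exact ⟨a₁ ∩ a₂, ha₁.inter ha₂, b₁ ∩ b₂, hb₁.inter hb₂, by ext x; simp; tauto⟩
  have hp2 : IsPiSystem p2 := fun s hs t ht _ => hs.inter ht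
  have hgen1 : m' ⊔ mN = generateFrom p1 := by
    refine le_antisymm (sup_le ?_ ?_) (generateFrom_le ?_)
    · intro s hs
      exact measurableSet_generateFrom ⟨s, hs, Set.univ, MeasurableSet.univ, Set.inter_univ s⟩
    · intro s hs
      exact measurableSet_generateFrom ⟨Set.univ, MeasurableSet.univ, s, hs, Set.univ_inter s⟩
    · rintro s ⟨a, ha, b, hb, rfl⟩
      exact ((le_sup_left : m' ≤ m' ⊔ mN) _ ha).inter ((le_sup_right : mN ≤ m' ⊔ mN) _ hb)
  have hgen2 : mG = generateFrom p2 := (@MeasurableSpace.generateFrom_measurableSet Ω mG).symm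
  refine CondIndepSets.condIndep (sup_le hm' hNle) hG hp1 hp2 hgen1 hgen2 ?_
  rw [condIndepSets_iff]
  rotate_left
  · rintro s ⟨a, ha, b, hb, rfl⟩; exact (hm' _ ha).inter (hNle _ hb)
  · exact fun s hs => hG _ hs
  rintro t1 t2 ⟨a, ha, b, hb, rfl⟩ ht2
  set c : ℝ := (μ b).toReal with hc
  have hb_int : Integrable (b.indicator fun _ => (1 : ℝ)) μ :=
    (integrable_const 1).indicator (hNle _ hb)
  have hbG : μ[(b.indicator fun _ => (1 : ℝ))|mG] =ᵐ[μ] fun _ => c := by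
    have h1 : μ[(b.indicator fun _ => (1 : ℝ))|mG]
        =ᵐ[μ] fun _ => ∫ x, (b.indicator fun _ => (1 : ℝ)) x ∂μ :=
      condExp_indep_eq hNle hG (stronglyMeasurable_const.indicator hb) hindep.symm
    refine h1.trans ?_
    filter_upwards with x
    simp [hc, integral_indicator_const, hNle _ hb, Measure.real]
  -- Claim B : μ⟦b ∩ t2 | m'⟧ =ᵐ c • μ⟦t2 | m'⟧
  have hBind : (b ∩ t2).indicator (fun _ => (1:ℝ)) = t2.indicator (b.indicator fun _ => 1) := by
    rw [Set.indicator_indicator, Set.inter_comm]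
  have hbt2G : μ[(b ∩ t2).indicator (fun _ => (1:ℝ))|mG]
      =ᵐ[μ] c • t2.indicator (fun _ => (1:ℝ)) := by
    rw [hBind]
    refine (condExp_indicator hb_int ht2).trans ?_
    filter_upwards [hbG] with x hx
    by_cases hxt : x ∈ t2 <;> simp [Set.indicator_of_mem, Set.indicator_of_notMem, hxt, hx]
  have hB : (μ⟦b ∩ t2 | m'⟧) =ᵐ[μ] c • (μ⟦t2 | m'⟧) := by
    refine (condExp_condExp_of_le hm'G hG).symm.trans ?_
    refine (condExp_congr_ae hbt2G).trans ?_
    exact condExp_smul c _ _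
  -- Claim C : μ⟦a ∩ b | m'⟧ =ᵐ a.indicator (fun _ => c)
  have hCind : (a ∩ b).indicator (fun _ => (1:ℝ)) = a.indicator (b.indicator fun _ => 1) := by
    rw [Set.indicator_indicator]
  have hbm' : μ[(b.indicator fun _ => (1 : ℝ))|m'] =ᵐ[μ] fun _ => c := by
    have hind' : ProbabilityTheory.Indep mN m' μ :=
      Kernel.indep_of_indep_of_le_right hindep.symm hm'G
    have h1 : μ[(b.indicator fun _ => (1 : ℝ))|m']
        =ᵐ[μ] fun _ => ∫ x, (b.indicator fun _ => (1 : ℝ)) x ∂μ :=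
      condExp_indep_eq hNle hm' (stronglyMeasurable_const.indicator hb) hind'
    refine h1.trans ?_
    filter_upwards with x
    simp [hc, integral_indicator_const, hNle _ hb, Measure.real]
  have hC : (μ⟦a ∩ b | m'⟧) =ᵐ[μ] a.indicator (fun _ => c) := by
    rw [hCind]
    refine (condExp_indicator hb_int ha).trans ?_
    filter_upwards [hbm'] with x hx
    by_cases hxa : x ∈ a <;> simp [Set.indicator_of_mem, Set.indicator_of_notMem, hxa, hx]
  -- Claim A and combination
  have hAind : (a ∩ b ∩ t2).indicator (fun _ => (1:ℝ))
      = a.indicator ((b ∩ t2).indicator fun _ => 1) := by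
    rw [Set.indicator_indicator, Set.inter_assoc]
  have hbt2_int : Integrable ((b ∩ t2).indicator fun _ => (1 : ℝ)) μ :=
    (integrable_const 1).indicator ((hNle _ hb).inter (hG _ ht2))
  have hA : (μ⟦a ∩ b ∩ t2 | m'⟧) =ᵐ[μ] a.indicator (c • (μ⟦t2 | m'⟧)) := by
    rw [hAind]
    refine (condExp_indicator hbt2_int ha).trans ?_
    filter_upwards [hB] with x hx
    by_cases hxa : x ∈ a <;> simp [Set.indicator_of_mem, Set.indicator_of_notMem, hxa, hx]
  refine hA.trans ?_
  filter_upwards [hC] with x hx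
  rw [Pi.mul_apply, hx]
  by_cases hxa : x ∈ a <;>
    simp [Set.indicator_of_mem, Set.indicator_of_notMem, hxa]

/-- The σ-algebra generated by `k (f ·, g ·)` is contained in `σ(f) ⊔ σ(g)`. -/
lemma comap_pair_le_sup {Ω α β γ : Type*} [mα : MeasurableSpace α] [mβ : MeasurableSpace β]
    [mγ : MeasurableSpace γ] (f : Ω → α) (g : Ω → β) (k : α × β → γ)
    (hk : Measurable k) :
    MeasurableSpace.comap (fun ω => k (f ω, g ω)) mγ ≤
      MeasurableSpace.comap f mα ⊔ MeasurableSpace.comap g mβ :=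
  calc MeasurableSpace.comap (fun ω => k (f ω, g ω)) mγ
      = MeasurableSpace.comap (fun ω => (f ω, g ω)) (MeasurableSpace.comap k mγ) := by
        rw [MeasurableSpace.comap_comp]; rfl
    _ ≤ MeasurableSpace.comap (fun ω => (f ω, g ω)) (mα.prod mβ) :=
        MeasurableSpace.comap_mono hk.comap_le
    _ = MeasurableSpace.comap (fun ω => (f ω, g ω))
          (mα.comap Prod.fst ⊔ mβ.comap Prod.snd) := rfl
    _ = MeasurableSpace.comap f mα ⊔ MeasurableSpace.comap g mβ := by
        rw [MeasurableSpace.comap_sup, MeasurableSpace.comap_comp,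
          MeasurableSpace.comap_comp]; rfl

/-- Confounded case of the paper's Theorem 1: with a latent confounder `U` of
`W = φ (U, M₁)` and `E = ψ (U, M₂)`, content features `X_a = h (W, N)`, and a
representation `Z` that is `X_a`-measurable (`σ(Z) ⊆ σ(X_a)`), the variables `Z` and `E`
are conditionally independent given the σ-algebra generated by `W`. -/
theorem representation_condIndep_env_of_confounding
    {Ω 𝒰 ℳ₁ ℳ₂ 𝒩 𝒲 ℰ 𝒳 𝒵 : Type*}
    [MeasurableSpace Ω] [StandardBorelSpace Ω]
    [m𝒰 : MeasurableSpace 𝒰] [mℳ₁ : MeasurableSpace ℳ₁] [mℳ₂ : MeasurableSpace ℳ₂]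
    [m𝒩 : MeasurableSpace 𝒩] [m𝒲 : MeasurableSpace 𝒲] [mℰ : MeasurableSpace ℰ]
    [m𝒳 : MeasurableSpace 𝒳] [m𝒵 : MeasurableSpace 𝒵]
    (μ : Measure Ω) [IsProbabilityMeasure μ]
    (U : Ω → 𝒰) (M₁ : Ω → ℳ₁) (M₂ : Ω → ℳ₂) (N : Ω → 𝒩)
    (hU : Measurable U) (hM₁ : Measurable M₁) (hM₂ : Measurable M₂) (hN : Measurable N)
    (hindep : iIndep
      ![MeasurableSpace.comap U m𝒰, MeasurableSpace.comap M₁ mℳ₁,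
        MeasurableSpace.comap M₂ mℳ₂, MeasurableSpace.comap N m𝒩] μ)
    (φ : 𝒰 × ℳ₁ → 𝒲) (ψ : 𝒰 × ℳ₂ → ℰ) (h : 𝒲 × 𝒩 → 𝒳)
    (hφ : Measurable φ) (hψ : Measurable ψ) (hh : Measurable h)
    (Z : Ω → 𝒵)
    (hZ : MeasurableSpace.comap Z m𝒵 ≤
      MeasurableSpace.comap (fun ω => h (φ (U ω, M₁ ω), N ω)) m𝒳) :
    CondIndepFun (MeasurableSpace.comap (fun ω => φ (U ω, M₁ ω)) m𝒲)
      ((hφ.comp (hU.prodMk hM₁)).comap_le)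
      Z (fun ω => ψ (U ω, M₂ ω)) μ := by
  rename_i mΩ _sb _ip
  have hGle : MeasurableSpace.comap U m𝒰 ⊔ MeasurableSpace.comap M₁ mℳ₁ ⊔
      MeasurableSpace.comap M₂ mℳ₂ ≤ mΩ :=
    sup_le (sup_le hU.comap_le hM₁.comap_le) hM₂.comap_le
  have hWle : MeasurableSpace.comap (fun ω => φ (U ω, M₁ ω)) m𝒲 ≤
      MeasurableSpace.comap U m𝒰 ⊔ MeasurableSpace.comap M₁ mℳ₁ :=
    comap_pair_le_sup U M₁ φ hφ
  have hW_G : MeasurableSpace.comap (fun ω => φ (U ω, M₁ ω)) m𝒲 ≤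
      MeasurableSpace.comap U m𝒰 ⊔ MeasurableSpace.comap M₁ mℳ₁ ⊔
      MeasurableSpace.comap M₂ mℳ₂ := hWle.trans le_sup_left
  have hEle : MeasurableSpace.comap (fun ω => ψ (U ω, M₂ ω)) mℰ ≤
      MeasurableSpace.comap U m𝒰 ⊔ MeasurableSpace.comap M₁ mℳ₁ ⊔
      MeasurableSpace.comap M₂ mℳ₂ :=
    (comap_pair_le_sup U M₂ ψ hψ).trans (sup_le (le_sup_left.trans le_sup_left) le_sup_right)
  have hZle : MeasurableSpace.comap Z m𝒵 ≤
      MeasurableSpace.comap (fun ω => φ (U ω, M₁ ω)) m𝒲 ⊔ MeasurableSpace.comap N m𝒩 :=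
    hZ.trans (comap_pair_le_sup (fun ω => φ (U ω, M₁ ω)) N h hh)
  have hGN : ProbabilityTheory.Indep
      (MeasurableSpace.comap U m𝒰 ⊔ MeasurableSpace.comap M₁ mℳ₁ ⊔
        MeasurableSpace.comap M₂ mℳ₂) (MeasurableSpace.comap N m𝒩) μ := by
    have hle : ∀ i, (![MeasurableSpace.comap U m𝒰, MeasurableSpace.comap M₁ mℳ₁,
        MeasurableSpace.comap M₂ mℳ₂, MeasurableSpace.comap N m𝒩] :
        Fin 4 → MeasurableSpace Ω) i ≤ mΩ := by
      intro i
      fin_cases i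
      · exact hU.comap_le
      · exact hM₁.comap_le
      · exact hM₂.comap_le
      · exact hN.comap_le
    have hdisj : Disjoint ({0, 1, 2} : Set (Fin 4)) ({3} : Set (Fin 4)) := by
      simp [Set.disjoint_left]
    have h4 := ProbabilityTheory.indep_iSup_of_disjoint hle hindep hdisj
    have hS : (⨆ i ∈ ({0, 1, 2} : Set (Fin 4)),
        (![MeasurableSpace.comap U m𝒰, MeasurableSpace.comap M₁ mℳ₁,
          MeasurableSpace.comap M₂ mℳ₂, MeasurableSpace.comap N m𝒩]) i)
        = MeasurableSpace.comap U m𝒰 ⊔ MeasurableSpace.comap M₁ mℳ₁ ⊔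
          MeasurableSpace.comap M₂ mℳ₂ := by
      rw [show ({0, 1, 2} : Set (Fin 4)) = insert 0 (insert 1 {2}) from rfl,
        iSup_insert, iSup_insert, iSup_singleton]
      simp [sup_assoc]
    have hT : (⨆ i ∈ ({3} : Set (Fin 4)),
        (![MeasurableSpace.comap U m𝒰, MeasurableSpace.comap M₁ mℳ₁,
          MeasurableSpace.comap M₂ mℳ₂, MeasurableSpace.comap N m𝒩]) i)
        = MeasurableSpace.comap N m𝒩 := by simp
    rwa [hS, hT] at h4
  have key := condIndep_sup_of_indep hW_G hGle hN.comap_le hGN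
  rw [condIndepFun_iff_condIndep]
  exact Kernel.indep_of_indep_of_le_left (Kernel.indep_of_indep_of_le_right key hEle) hZle
end
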